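/- In the setting of the vertical smoothing of a C⁰-Finsler structure, the vertical radial derivative of ζ_ε ∗_v F is strictly positive on the annulus 𝒜 = {(x,y) : x ∈ U, 1/2 ≤ ‖y‖ ≤ 2r_U/r_u}: namely yⁱ ∂(ζ_ε ∗_v F)/∂yⁱ (x,y) ≥ (7/128) r_u ‖y‖ > 0 for all (x,y) ∈ 𝒜 and all sufficiently small ε. -/

import Mathlib

open MeasureTheory Module
open scoped Convolution

/-- The standard mollifier on ℝⁿ. -/
noncomputable def eta {n : ℕ} (C : ℝ) (x : EuclideanSpace ℝ (Fin n)) : ℝ :=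
  if ‖x‖ < 1 then C * Real.exp (1 / (‖x‖ ^ 2 - 1)) else 0

/-- The rescaled mollifier `η_ε(x) = ε^{-n} η(x/ε)`. -/
noncomputable def etaE {n : ℕ} (C ε : ℝ) (x : EuclideanSpace ℝ (Fin n)) : ℝ :=
  (1 / ε ^ n) * eta C (ε⁻¹ • x)

lemma eta_eq {n : ℕ} (C : ℝ) (x : EuclideanSpace ℝ (Fin n)) :
    eta C x = C * expNegInvGlue (1 - ‖x‖ ^ 2) := by
  rw [eta]
  split_ifs with h
  · have h2 : ¬ (1 - ‖x‖ ^ 2 ≤ 0) := by nlinarith [norm_nonneg x]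
    rw [expNegInvGlue, if_neg h2]
    congr 1
    rw [one_div, neg_inv, neg_sub]
  · have h2 : 1 - ‖x‖ ^ 2 ≤ 0 := by nlinarith [norm_nonneg x, le_of_not_gt h]
    rw [expNegInvGlue, if_pos h2, mul_zero]

lemma eta_contDiff {n : ℕ} (C : ℝ) : ContDiff ℝ (⊤ : ℕ∞) (eta (n := n) C) := by
  have : eta (n := n) C = fun x => C * expNegInvGlue (1 - ‖x‖ ^ 2) := funext (eta_eq C)
  rw [this]
  exact contDiff_const.mul (expNegInvGlue.contDiff.comp
    (contDiff_const.sub (contDiff_norm_sq ℝ)))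

lemma eta_nonneg {n : ℕ} {C : ℝ} (hC : 0 ≤ C) (x : EuclideanSpace ℝ (Fin n)) :
    0 ≤ eta C x := by
  rw [eta_eq]; exact mul_nonneg hC (expNegInvGlue.nonneg _)

lemma etaE_contDiff {n : ℕ} (C ε : ℝ) : ContDiff ℝ (⊤ : ℕ∞) (etaE (n := n) C ε) :=
  contDiff_const.mul ((eta_contDiff C).comp (contDiff_const_smul ε⁻¹))

lemma etaE_nonneg {n : ℕ} {C ε : ℝ} (hC : 0 ≤ C) (hε : 0 ≤ ε)
    (x : EuclideanSpace ℝ (Fin n)) : 0 ≤ etaE C ε x :=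
  mul_nonneg (by positivity) (eta_nonneg hC _)

lemma etaE_zero {n : ℕ} {C ε : ℝ} (hε : 0 < ε) {x : EuclideanSpace ℝ (Fin n)}
    (hx : ε ≤ ‖x‖) : etaE C ε x = 0 := by
  rw [etaE, eta, if_neg, mul_zero]
  rw [norm_smul, norm_inv, Real.norm_eq_abs, abs_of_pos hε, not_lt]
  rw [le_inv_mul_iff₀ hε, mul_one]
  exact hx

lemma etaE_hasCompactSupport {n : ℕ} {C ε : ℝ} (hε : 0 < ε) :
    HasCompactSupport (etaE (n := n) C ε) :=
  HasCompactSupport.intro (isCompact_closedBall 0 ε) fun x hx =>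
    etaE_zero hε (le_of_lt (by simpa [dist_eq_norm] using hx))

lemma etaE_integral {n : ℕ} {C ε : ℝ} (hε : 0 < ε)
    (hnorm : (∫ x : EuclideanSpace ℝ (Fin n), eta C x) = 1) :
    (∫ x : EuclideanSpace ℝ (Fin n), etaE C ε x) = 1 := by
  have h1 : (∫ x : EuclideanSpace ℝ (Fin n), eta C (ε⁻¹ • x))
      = |ε ^ finrank ℝ (EuclideanSpace ℝ (Fin n))| • ∫ x, eta C x :=
    Measure.integral_comp_inv_smul volume (eta C) ε
  simp only [hnorm, smul_eq_mul, mul_one, finrank_euclideanSpace_fin,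
    abs_of_pos (pow_pos hε n)] at h1
  unfold etaE
  rw [integral_const_mul, h1, one_div, inv_mul_cancel₀ (by positivity)]


set_option maxHeartbeats 2000000 in
/-- In the setting of the vertical smoothing of a C⁰-Finsler structure, the vertical
radial derivative of `ζ_ε ∗_v F` is strictly positive on the annulus
`𝒜 = {(x,y) : x ∈ U, 1/2 ≤ ‖y‖ ≤ 2r_U/r_u}`:
`yⁱ ∂(ζ_ε ∗_v F)/∂yⁱ (x,y) ≥ (7/128) r_u ‖y‖ > 0` for all `(x,y) ∈ 𝒜` and all
sufficiently small `ε` (namely `ε, u(ε) < r_u/(16 n r_U)`). The contraction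
`yⁱ ∂/∂yⁱ` is expressed as the Fréchet derivative in the fiber variable applied
to `y` itself. -/
theorem vertical_convolution_radial_derivative_pos {n : ℕ} (C : ℝ) (hC : 0 < C)
    (hnorm : (∫ x : EuclideanSpace ℝ (Fin n), eta C x) = 1)
    (U : Set (EuclideanSpace ℝ (Fin n))) (hUo : IsOpen U)
    (hUc : IsCompact (closure U))
    (F : EuclideanSpace ℝ (Fin n) → EuclideanSpace ℝ (Fin n) → ℝ)
    (hFc : Continuous fun p : EuclideanSpace ℝ (Fin n) × EuclideanSpace ℝ (Fin n) =>
      F p.1 p.2)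
    (hnn : ∀ x ∈ closure U, ∀ y, 0 ≤ F x y)
    (hzero : ∀ x ∈ closure U, ∀ y, F x y = 0 → y = 0)
    (hhom : ∀ x ∈ closure U, ∀ (μ : ℝ) y, 0 ≤ μ → F x (μ • y) = μ * F x y)
    (hsub : ∀ x ∈ closure U, ∀ y z, F x (y + z) ≤ F x y + F x z)
    (rU ru : ℝ)
    (hrU : IsGreatest {c | ∃ x ∈ closure U, ∃ y : EuclideanSpace ℝ (Fin n),
      ‖y‖ = 1 ∧ F x y = c} rU)
    (hru : IsLeast {c | ∃ x ∈ closure U, ∃ y : EuclideanSpace ℝ (Fin n),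
      ‖y‖ = 1 ∧ F x y = c} ru)
    (u : ℝ → ℝ) (ε : ℝ)
    (hε : 0 < ε) (hε' : ε < ru / (16 * n * rU))
    (hu : 0 < u ε) (hu' : u ε < ru / (16 * n * rU)) :
    ∀ x ∈ U, ∀ y : EuclideanSpace ℝ (Fin n),
      1 / 2 ≤ ‖y‖ → ‖y‖ ≤ 2 * rU / ru →
      7 / 128 * ru * ‖y‖ ≤
        fderiv ℝ (fun w => ∫ z,
          ((1 - u ε) * etaE C ε z + u ε * etaE C (2 * rU / ru) z) * F x (w - z)) y y ∧
      0 < fderiv ℝ (fun w => ∫ z,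
          ((1 - u ε) * etaE C ε z + u ε * etaE C (2 * rU / ru) z) * F x (w - z)) y y := by
  intro x hx y hy1 hy2
  have hxc : x ∈ closure U := subset_closure hx
  obtain ⟨⟨x₀, hx₀, y₀, hy₀n, hy₀F⟩, hub⟩ := hrU
  obtain ⟨⟨x₁, hx₁, y₁, hy₁n, hy₁F⟩, hlb⟩ := hru
  have hru_pos : 0 < ru := by
    have h0 : 0 ≤ ru := hy₁F ▸ hnn x₁ hx₁ y₁
    rcases h0.lt_or_eq with h | h
    · exact h
    · exfalso
      have : y₁ = 0 := hzero x₁ hx₁ y₁ (by rw [hy₁F, ← h])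
      rw [this, norm_zero] at hy₁n; norm_num at hy₁n
  have hrUru : ru ≤ rU := hlb ⟨x₀, hx₀, y₀, hy₀n, hy₀F⟩
  have hrU_pos : 0 < rU := hru_pos.trans_le hrUru
  have hn1 : (1:ℝ) ≤ n := by
    rcases Nat.eq_zero_or_pos n with h | h
    · exfalso; subst h; norm_num at hε'; linarith
    · exact_mod_cast h
  have hy0 : 0 < ‖y‖ := lt_of_lt_of_le (by norm_num) hy1
  -- basic bounds on F
  have hF0 : F x 0 = 0 := by
    have := hhom x hxc 0 0 le_rfl; simpa using this
  have hFub : ∀ v : EuclideanSpace ℝ (Fin n), F x v ≤ rU * ‖v‖ := by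
    intro v
    rcases eq_or_ne v 0 with rfl | hv
    · simp [hF0]
    · have hvn : 0 < ‖v‖ := norm_pos_iff.mpr hv
      have hw : ‖(‖v‖⁻¹ • v)‖ = 1 := by
        rw [norm_smul, norm_inv, norm_norm, inv_mul_cancel₀ hvn.ne']
      have h1 : F x (‖v‖⁻¹ • v) ≤ rU := hub ⟨x, hxc, _, hw, rfl⟩
      have h2 : F x v = ‖v‖ * F x (‖v‖⁻¹ • v) := by
        rw [← hhom x hxc _ _ (norm_nonneg v), smul_smul, mul_inv_cancel₀ hvn.ne', one_smul]
      rw [h2]; nlinarith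
  have hFlb : ∀ v : EuclideanSpace ℝ (Fin n), ru * ‖v‖ ≤ F x v := by
    intro v
    rcases eq_or_ne v 0 with rfl | hv
    · simp [hF0]
    · have hvn : 0 < ‖v‖ := norm_pos_iff.mpr hv
      have hw : ‖(‖v‖⁻¹ • v)‖ = 1 := by
        rw [norm_smul, norm_inv, norm_norm, inv_mul_cancel₀ hvn.ne']
      have h1 : ru ≤ F x (‖v‖⁻¹ • v) := hlb ⟨x, hxc, _, hw, rfl⟩
      have h2 : F x v = ‖v‖ * F x (‖v‖⁻¹ • v) := by
        rw [← hhom x hxc _ _ (norm_nonneg v), smul_smul, mul_inv_cancel₀ hvn.ne', one_smul]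
      rw [h2]; nlinarith
  set R := 2 * rU / ru with hRdef
  have hRpos : 0 < R := by positivity
  set G : EuclideanSpace ℝ (Fin n) → ℝ := fun w => ∫ z,
      ((1 - u ε) * etaE C ε z + u ε * etaE C R z) * F x (w - z) with hGdef
  -- continuity and integrability
  have hFxc : Continuous (F x) := hFc.comp (continuous_const.prodMk continuous_id)
  have hInt : ∀ σ : ℝ, 0 < σ → ∀ w : EuclideanSpace ℝ (Fin n),
      Integrable (fun z => etaE C σ z * F x (w - z)) := by
    intro σ hσ w
    apply Continuous.integrable_of_hasCompactSupport
    · exact (etaE_contDiff C σ).continuous.mul (hFxc.comp (continuous_const.sub continuous_id))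
    · exact (etaE_hasCompactSupport hσ).mul_right
  have hIntη : ∀ σ : ℝ, 0 < σ → Integrable (etaE (n := n) C σ) := fun σ hσ =>
    (etaE_contDiff C σ).continuous.integrable_of_hasCompactSupport (etaE_hasCompactSupport hσ)
  have hGsplit : ∀ w, G w = (1 - u ε) * (∫ z, etaE C ε z * F x (w - z))
      + u ε * (∫ z, etaE C R z * F x (w - z)) := by
    intro w
    rw [hGdef]
    have h1 : ∀ z : EuclideanSpace ℝ (Fin n),
        ((1 - u ε) * etaE C ε z + u ε * etaE C R z) * F x (w - z)
        = (1 - u ε) * (etaE C ε z * F x (w - z)) + u ε * (etaE C R z * F x (w - z)) :=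
      fun z => by ring
    simp only [h1]
    rw [integral_add (((hInt ε hε w).const_mul _)) (((hInt R hRpos w).const_mul _)),
      integral_const_mul, integral_const_mul]
  -- arithmetic bounds
  have h16pos : (0:ℝ) < 16 * n * rU := by nlinarith
  have hε2 : ε * (16 * n * rU) < ru := (lt_div_iff₀ h16pos).mp hε'
  have hεb : 2 * rU * ε ≤ ru / 8 := by nlinarith [mul_nonneg (mul_nonneg (by norm_num : (0:ℝ) ≤ 16) (by linarith : (0:ℝ) ≤ (n:ℝ) - 1)) (mul_nonneg hrU_pos.le hε.le)]
  have hub2 : u ε * (16 * n * rU) < ru := (lt_div_iff₀ h16pos).mp hu'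
  have huru : u ε * rU ≤ ru / 16 := by nlinarith [mul_nonneg (mul_nonneg (by norm_num : (0:ℝ) ≤ 16) (by linarith : (0:ℝ) ≤ (n:ℝ) - 1)) (mul_nonneg hrU_pos.le hu.le)]
  have hu16 : u ε ≤ 1 / 16 := by nlinarith
  -- key growth estimate
  have hkey : ∀ t : ℝ, 0 < t → t * (7 / 128 * ru * ‖y‖) ≤ G (y + t • y) - G y := by
    intro t ht
    have h1t : (0:ℝ) < 1 + t := by linarith
    have hcvx : ∀ z : EuclideanSpace ℝ (Fin n),
        t * (F x (y - z) - F x (-z)) ≤ F x ((y + t • y) - z) - F x (y - z) := by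
      intro z
      have heq : (1 + t)⁻¹ • ((y + t • y) - z) + (t * (1 + t)⁻¹) • (-z) = y - z := by
        have hne : (1 + t) ≠ 0 := h1t.ne'
        have h1 : y + t • y = (1 + t) • y := by rw [add_smul, one_smul]
        have hc : (1 + t)⁻¹ + t * (1 + t)⁻¹ = 1 := by field_simp
        rw [h1, smul_sub, smul_smul, inv_mul_cancel₀ hne, one_smul, smul_neg,
          ← sub_eq_add_neg, sub_sub, ← add_smul, hc, one_smul]
      have hs : F x (y - z) ≤ (1 + t)⁻¹ * F x ((y + t • y) - z)
          + (t * (1 + t)⁻¹) * F x (-z) := by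
        calc F x (y - z) = F x ((1 + t)⁻¹ • ((y + t • y) - z) + (t * (1 + t)⁻¹) • (-z)) := by
              rw [heq]
          _ ≤ F x ((1 + t)⁻¹ • ((y + t • y) - z)) + F x ((t * (1 + t)⁻¹) • (-z)) :=
              hsub x hxc _ _
          _ = (1 + t)⁻¹ * F x ((y + t • y) - z) + (t * (1 + t)⁻¹) * F x (-z) := by
              rw [hhom x hxc ((1 + t)⁻¹) _ (by positivity), hhom x hxc (t * (1 + t)⁻¹) _ (by positivity)]
      have h2 := mul_le_mul_of_nonneg_left hs h1t.le
      have h3 : (1 + t) * ((1 + t)⁻¹ * F x ((y + t • y) - z)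
          + (t * (1 + t)⁻¹) * F x (-z)) = F x ((y + t • y) - z) + t * F x (-z) := by
        field_simp
        try ring
      rw [h3] at h2
      linarith
    -- pointwise bound for the ε part
    have hpt1 : ∀ z : EuclideanSpace ℝ (Fin n),
        etaE C ε z * (t * (ru * ‖y‖ - 2 * rU * ε))
        ≤ etaE C ε z * F x ((y + t • y) - z) - etaE C ε z * F x (y - z) := by
      intro z
      rw [← mul_sub]
      rcases le_or_gt ε ‖z‖ with h | h
      · rw [etaE_zero hε h]; simp
      · apply mul_le_mul_of_nonneg_left _ (etaE_nonneg hC.le hε.le z)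
        have h2 : F x y ≤ F x (y - z) + F x z := by
          have := hsub x hxc (y - z) z
          rwa [sub_add_cancel] at this
        have h3 := hFlb y
        have h4 := hFub z
        have h5 := hFub (-z)
        rw [norm_neg] at h5
        have h7 : ru * ‖y‖ - 2 * rU * ε ≤ F x (y - z) - F x (-z) := by nlinarith
        calc t * (ru * ‖y‖ - 2 * rU * ε) ≤ t * (F x (y - z) - F x (-z)) :=
              mul_le_mul_of_nonneg_left h7 ht.le
          _ ≤ _ := hcvx z
    -- pointwise bound for the R part
    have hpt2 : ∀ z : EuclideanSpace ℝ (Fin n),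
        etaE C R z * (-(t * (rU * ‖y‖)))
        ≤ etaE C R z * F x ((y + t • y) - z) - etaE C R z * F x (y - z) := by
      intro z
      rw [← mul_sub]
      apply mul_le_mul_of_nonneg_left _ (etaE_nonneg hC.le hRpos.le z)
      have h1 : F x (y - z) ≤ F x ((y + t • y) - z) + F x (t • (-y)) := by
        have h := hsub x hxc ((y + t • y) - z) (t • (-y))
        have hvec : ((y + t • y) - z) + t • (-y) = y - z := by
          rw [smul_neg]; abel
        rwa [hvec] at h
      rw [hhom x hxc t (-y) ht.le] at h1
      have h2 := hFub (-y)
      rw [norm_neg] at h2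
      nlinarith
    -- integrate the ε part
    have hIε : t * (ru * ‖y‖ - 2 * rU * ε)
        ≤ (∫ z, etaE C ε z * F x ((y + t • y) - z)) - ∫ z, etaE C ε z * F x (y - z) := by
      calc t * (ru * ‖y‖ - 2 * rU * ε)
          = (∫ z : EuclideanSpace ℝ (Fin n), etaE C ε z) * (t * (ru * ‖y‖ - 2 * rU * ε)) := by
            rw [etaE_integral hε hnorm, one_mul]
        _ = ∫ z, etaE C ε z * (t * (ru * ‖y‖ - 2 * rU * ε)) := (integral_mul_const _ _).symm
        _ ≤ ∫ z, (etaE C ε z * F x ((y + t • y) - z) - etaE C ε z * F x (y - z)) := by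
            apply integral_mono ((hIntη ε hε).mul_const _)
              ((hInt ε hε (y + t • y)).sub (hInt ε hε y))
            intro z
            simpa using hpt1 z
        _ = _ := integral_sub (hInt ε hε (y + t • y)) (hInt ε hε y)
    -- integrate the R part
    have hIR : -(t * (rU * ‖y‖))
        ≤ (∫ z, etaE C R z * F x ((y + t • y) - z)) - ∫ z, etaE C R z * F x (y - z) := by
      calc -(t * (rU * ‖y‖))
          = (∫ z : EuclideanSpace ℝ (Fin n), etaE C R z) * (-(t * (rU * ‖y‖))) := by
            rw [etaE_integral hRpos hnorm, one_mul]
        _ = ∫ z, etaE C R z * (-(t * (rU * ‖y‖))) := (integral_mul_const _ _).symm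
        _ ≤ ∫ z, (etaE C R z * F x ((y + t • y) - z) - etaE C R z * F x (y - z)) := by
            apply integral_mono ((hIntη R hRpos).mul_const _)
              ((hInt R hRpos (y + t • y)).sub (hInt R hRpos y))
            intro z
            simpa using hpt2 z
        _ = _ := integral_sub (hInt R hRpos (y + t • y)) (hInt R hRpos y)
    -- assemble
    have e1 : (1 - u ε) * (t * (ru * ‖y‖ - 2 * rU * ε))
        ≤ (1 - u ε) * ((∫ z, etaE C ε z * F x ((y + t • y) - z))
          - ∫ z, etaE C ε z * F x (y - z)) :=
      mul_le_mul_of_nonneg_left hIε (by linarith)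
    have e2 : u ε * (-(t * (rU * ‖y‖)))
        ≤ u ε * ((∫ z, etaE C R z * F x ((y + t • y) - z))
          - ∫ z, etaE C R z * F x (y - z)) :=
      mul_le_mul_of_nonneg_left hIR hu.le
    have s1 : t * (3 / 4 * (ru * ‖y‖)) ≤ t * (ru * ‖y‖ - 2 * rU * ε) :=
      mul_le_mul_of_nonneg_left (by nlinarith) ht.le
    have s2 : 15 / 16 * (t * (3 / 4 * (ru * ‖y‖)))
        ≤ (1 - u ε) * (t * (ru * ‖y‖ - 2 * rU * ε)) := by
      apply mul_le_mul (by linarith) s1 (by positivity) (by linarith)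
    have s3 : u ε * (t * (rU * ‖y‖)) ≤ 1 / 16 * (t * (ru * ‖y‖)) := by
      nlinarith [mul_le_mul_of_nonneg_right huru (mul_nonneg ht.le (norm_nonneg y))]
    have hsplit1 := hGsplit (y + t • y)
    have hsplit2 := hGsplit y
    have hGdiff : G (y + t • y) - G y
        = (1 - u ε) * ((∫ z, etaE C ε z * F x ((y + t • y) - z))
            - ∫ z, etaE C ε z * F x (y - z))
          + u ε * ((∫ z, etaE C R z * F x ((y + t • y) - z))
            - ∫ z, etaE C R z * F x (y - z)) := by
      rw [hsplit1, hsplit2]; ring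
    rw [hGdiff]
    nlinarith [e1, e2, s2, s3, mul_pos ht hy0, mul_pos hru_pos hy0]
  -- smoothness of G
  have hGc : ContDiff ℝ (⊤ : ℕ∞) G := by
    have hζs : ContDiff ℝ (⊤ : ℕ∞) (fun z => (1 - u ε) * etaE C ε z + u ε * etaE C R z) :=
      (contDiff_const.mul (etaE_contDiff (n := n) C ε)).add
        (contDiff_const.mul (etaE_contDiff (n := n) C R))
    have hζcs : HasCompactSupport
        (fun z : EuclideanSpace ℝ (Fin n) =>
          (1 - u ε) * etaE C ε z + u ε * etaE C R z) := by
      apply HasCompactSupport.intro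
        (isCompact_closedBall (0 : EuclideanSpace ℝ (Fin n)) (max ε R))
      intro z hz
      have hz' : max ε R < ‖z‖ := by simpa [dist_eq_norm] using hz
      rw [etaE_zero hε (le_of_lt (lt_of_le_of_lt (le_max_left _ _) hz')),
        etaE_zero hRpos (le_of_lt (lt_of_le_of_lt (le_max_right _ _) hz')),
        mul_zero, mul_zero, add_zero]
    have hloc : LocallyIntegrable (F x) volume := hFxc.locallyIntegrable
    have heq : G = (fun z => (1 - u ε) * etaE C ε z + u ε * etaE C R z)
        ⋆[ContinuousLinearMap.mul ℝ ℝ, volume] (F x) := by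
      rw [hGdef]
      funext w
      simp only [convolution, ContinuousLinearMap.mul_apply']
    rw [heq]
    exact hζcs.contDiff_convolution_left _ hζs hloc
  have hdiff : DifferentiableAt ℝ G y :=
    (hGc.differentiable (by simp)).differentiableAt
  -- derivative along the ray
  have hline : HasDerivAt (fun s : ℝ => y + s • y) y 0 := by
    simpa using ((hasDerivAt_id (0:ℝ)).smul_const y).const_add y
  have hfd : HasFDerivAt G (fderiv ℝ G y) ((fun s : ℝ => y + s • y) 0) := by
    simpa using hdiff.hasFDerivAt
  have hg : HasDerivAt (fun s : ℝ => G (y + s • y)) (fderiv ℝ G y y) 0 :=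
    hfd.comp_hasDerivAt (f := fun s : ℝ => y + s • y) 0 hline
  haveI : (nhdsWithin (0:ℝ) (Set.Ioi 0)).NeBot := nhdsGT_neBot 0
  have htend : Filter.Tendsto (slope (fun s : ℝ => G (y + s • y)) 0)
      (nhdsWithin 0 (Set.Ioi 0)) (nhds (fderiv ℝ G y y)) :=
    (hasDerivAt_iff_tendsto_slope.mp hg).mono_left
      (nhdsWithin_mono 0 fun s hs => ne_of_gt hs)
  have hmain : 7 / 128 * ru * ‖y‖ ≤ fderiv ℝ G y y := by
    refine ge_of_tendsto htend (eventually_nhdsWithin_of_forall fun t ht => ?_)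
    have hk := hkey t ht
    have hslope : slope (fun s : ℝ => G (y + s • y)) 0 t
        = (G (y + t • y) - G y) / t := by
      rw [slope_def_field]
      simp
    rw [hslope, le_div_iff₀ ht]
    linarith
  exact ⟨hmain, lt_of_lt_of_le (by positivity) hmain⟩
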